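/- For every dihedral permutation α of Z/17 (i.e., i ↦ ±i + t), the map (i,x) ↦ (α(i), x) is an automorphism of the Biggs-Smith graph. -/
import Mathlib


/-- Vertex set of the Biggs-Smith graph: `(i, x)` with `i ∈ ℤ/17` and
`x ∈ {a,b,c,d,e,f}` encoded as `Fin 6` (`0=a, 1=b, 2=c, 3=d, 4=e, 5=f`). -/
abbrev BSV : Type := ZMod 17 × Fin 6

/-- Base (one-directional) edge relation of the Biggs-Smith graph. -/
def bsRel (p q : BSV) : Prop :=
  (p.1 = q.1 ∧ ((p.2 = 4 ∧ q.2 = 0) ∨ (p.2 = 4 ∧ q.2 = 1) ∨ (p.2 = 5 ∧ q.2 = 2) ∨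
    (p.2 = 5 ∧ q.2 = 3) ∨ (p.2 = 4 ∧ q.2 = 5))) ∨
  (p.2 = 0 ∧ q.2 = 0 ∧ q.1 = p.1 + 1) ∨
  (p.2 = 1 ∧ q.2 = 1 ∧ q.1 = p.1 + 4) ∨
  (p.2 = 2 ∧ q.2 = 2 ∧ q.1 = p.1 + 2) ∨
  (p.2 = 3 ∧ q.2 = 3 ∧ q.1 = p.1 + 8)

/-- The Biggs-Smith graph. -/
def biggsSmith : SimpleGraph BSV := SimpleGraph.fromRel bsRel

instance : DecidableRel bsRel := fun p q => by unfold bsRel; infer_instance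

instance : DecidableRel biggsSmith.Adj := fun v w =>
  decidable_of_iff (v ≠ w ∧ (bsRel v w ∨ bsRel w v)) (by
    rw [biggsSmith, SimpleGraph.fromRel_adj])

/-- For every dihedral permutation `i ↦ ε·i + t` of `ℤ/17` (with `ε = ±1`), the induced
map `(i,x) ↦ (ε·i + t, x)` is an automorphism of the Biggs-Smith graph. -/
private lemma zaux1 (t a b c : ZMod 17) : (b + t = a + t + c) ↔ (b = a + c) := by
  constructor <;> intro h <;> linear_combination h

private lemma zaux2 (t a b c : ZMod 17) : (-b + t = -a + t + c) ↔ (a = b + c) := by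
  constructor <;> intro h <;> linear_combination h

private lemma zaux3 (t a b : ZMod 17) : (-a + t = -b + t) ↔ (a = b) := by
  constructor <;> intro h <;> linear_combination -h

private lemma rel_pos (t : ZMod 17) (p q : BSV) :
    bsRel (p.1 + t, p.2) (q.1 + t, q.2) ↔ bsRel p q := by
  unfold bsRel
  dsimp only
  simp only [zaux1, add_left_inj]

set_option maxHeartbeats 2000000 in
private lemma rel_neg (t : ZMod 17) (p q : BSV) :
    (bsRel (-p.1 + t, p.2) (-q.1 + t, q.2) ∨ bsRel (-q.1 + t, q.2) (-p.1 + t, p.2)) ↔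
      (bsRel p q ∨ bsRel q p) := by
  unfold bsRel
  dsimp only
  simp only [zaux2, zaux3]
  itauto

theorem biggsSmith_dihedral_automorphism :
    ∀ ε : ZMod 17, (ε = 1 ∨ ε = -1) → ∀ t : ZMod 17,
      ∃ φ : biggsSmith ≃g biggsSmith,
        ∀ p : BSV, φ p = (ε * p.1 + t, p.2) := by
  intro ε hε t
  have hε2 : ε * ε = 1 := by rcases hε with h | h <;> subst h <;> ring
  have hinj : ∀ a b : ZMod 17, ε * a + t = ε * b + t → a = b := by
    intro a b h
    rcases hε with h1 | h1 <;> subst h1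
    · linear_combination h
    · linear_combination -h
  refine ⟨⟨⟨fun p => (ε * p.1 + t, p.2), fun p => (ε * (p.1 - t), p.2), ?_, ?_⟩, ?_⟩,
    fun p => rfl⟩
  · intro p
    dsimp only
    rw [add_sub_cancel_right, ← mul_assoc, hε2, one_mul]
  · intro p
    dsimp only
    rw [← mul_assoc, hε2, one_mul, sub_add_cancel]
  · intro p q
    simp only [Equiv.coe_fn_mk, biggsSmith, SimpleGraph.fromRel_adj]
    have hne : (ε * p.1 + t, p.2) ≠ (ε * q.1 + t, q.2) ↔ p ≠ q := by
      constructor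
      · intro h hpq
        exact h (by rw [hpq])
      · intro h he
        rw [Prod.ext_iff] at he
        exact h (Prod.ext_iff.mpr ⟨hinj _ _ he.1, he.2⟩)
    rw [hne]
    rcases hε with h | h <;> subst h
    · simp only [one_mul]
      rw [rel_pos t p q, rel_pos t q p]
    · simp only [neg_one_mul]
      rw [rel_neg t p q]
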